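/- Let λ and μ be partitions of n with K_{λμ} = 1, ℓ(λ) = h, ℓ(μ) = l, μ_{h+1} < μ_h, and μ_h > 1. Define λ* by λ*_i = λ_i − 1 for 1 ≤ i ≤ h, and μ* by μ*_i = μ_i − 1 for 1 ≤ i ≤ h and μ*_i = μ_i for i > h. Then λ* and μ* are partitions of n − h and K_{λ* μ*} = 1. -/

import Mathlib

/-- A partition encoded as a weakly decreasing, finitely supported function `ℕ → ℕ`
(0-indexed: `l 0` is the first part). -/
def IsPartition (l : ℕ → ℕ) : Prop :=
  Antitone l ∧ ∃ N, ∀ i, N ≤ i → l i = 0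

/-- The size (sum of the parts). -/
noncomputable def psize (l : ℕ → ℕ) : ℕ := ∑ᶠ i, l i

/-- Dominance order: every partial sum of `l` is at least that of `m`. -/
def Dominates (l m : ℕ → ℕ) : Prop :=
  ∀ k, ∑ i ∈ Finset.range k, m i ≤ ∑ i ∈ Finset.range k, l i

/-- `l` has exactly `h` (nonzero) parts. -/
def PartLength (l : ℕ → ℕ) (h : ℕ) : Prop :=
  (∀ i, i < h → 0 < l i) ∧ ∀ i, h ≤ i → l i = 0

/-- A semistandard Young tableau of shape `l`: positive entries in the cells
`(i, j)` with `j < l i`, zero outside, rows weakly increasing, columns strictly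
increasing. -/
def IsSSYT (l : ℕ → ℕ) (T : ℕ → ℕ → ℕ) : Prop :=
  (∀ i j, j < l i → 1 ≤ T i j) ∧
  (∀ i j, l i ≤ j → T i j = 0) ∧
  (∀ i j k, j ≤ k → k < l i → T i j ≤ T i k) ∧
  (∀ i i' j, i < i' → j < l i' → T i j < T i' j)

/-- The number of cells of `T` (inside shape `l`) with entry `m + 1`. -/
noncomputable def entryCount (l : ℕ → ℕ) (T : ℕ → ℕ → ℕ) (m : ℕ) : ℕ :=
  Set.ncard {p : ℕ × ℕ | p.2 < l p.1 ∧ T p.1 p.2 = m + 1}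

/-- `T` has weight `w`: the entry `m + 1` occurs `w m` times. -/
def HasWeight (l : ℕ → ℕ) (T : ℕ → ℕ → ℕ) (w : ℕ → ℕ) : Prop :=
  ∀ m, entryCount l T m = w m

/-- The Kostka number: the number of semistandard Young tableaux of shape `l`
and weight `w`. -/
noncomputable def kostka (l w : ℕ → ℕ) : ℕ :=
  Set.ncard {T : ℕ → ℕ → ℕ | IsSSYT l T ∧ HasWeight l T w}


section Helpers

lemma psize_spec (f : ℕ → ℕ) (N : ℕ) (hN : ∀ i, N ≤ i → f i = 0) :
    psize f = ∑ i ∈ Finset.range N, f i := by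
  apply finsum_eq_sum_of_support_subset
  intro x hx
  simp only [Function.mem_support] at hx
  simp only [Finset.coe_range, Set.mem_Iio]
  by_contra hc
  exact hx (hN x (le_of_not_gt hc))

lemma sum_range_le_psize (f : ℕ → ℕ) (N k : ℕ) (hN : ∀ i, N ≤ i → f i = 0) :
    ∑ i ∈ Finset.range k, f i ≤ psize f := by
  rw [psize_spec f (max N k) (fun i hi => hN i (le_trans (le_max_left _ _) hi))]
  exact Finset.sum_le_sum_of_subset (Finset.range_subset_range.2 (le_max_right _ _))

/-- cardinality of a "band" between g and f restricted to rows < k -/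
lemma ncard_band (f g : ℕ → ℕ) (k : ℕ) :
    {p : ℕ × ℕ | p.1 < k ∧ g p.1 ≤ p.2 ∧ p.2 < f p.1}.ncard
      = ∑ r ∈ Finset.range k, (f r - g r) := by
  induction k with
  | zero => simp
  | succ k ih =>
    have hsplit : {p : ℕ × ℕ | p.1 < k + 1 ∧ g p.1 ≤ p.2 ∧ p.2 < f p.1}
        = {p : ℕ × ℕ | p.1 < k ∧ g p.1 ≤ p.2 ∧ p.2 < f p.1}
          ∪ (fun c => (k, c)) '' (Set.Ico (g k) (f k)) := by
      ext ⟨r, c⟩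
      simp only [Set.mem_setOf_eq, Set.mem_union, Set.mem_image, Set.mem_Ico]
      constructor
      · rintro ⟨hr, h1, h2⟩
        rcases Nat.lt_succ_iff_lt_or_eq.1 hr with hr' | rfl
        · exact Or.inl ⟨hr', h1, h2⟩
        · exact Or.inr ⟨c, ⟨h1, h2⟩, rfl⟩
      · rintro (⟨hr, h1, h2⟩ | ⟨c', ⟨h1, h2⟩, heq⟩)
        · exact ⟨Nat.lt_succ_of_lt hr, h1, h2⟩
        · cases heq; exact ⟨Nat.lt_succ_self _, h1, h2⟩
    have hico : (Set.Ico (g k) (f k)) = (↑(Finset.Ico (g k) (f k)) : Set ℕ) := by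
      simp
    have hfin1 : {p : ℕ × ℕ | p.1 < k ∧ g p.1 ≤ p.2 ∧ p.2 < f p.1}.Finite := by
      apply Set.Finite.subset (Set.finite_Iio k |>.prod
        (Set.finite_Iio ((Finset.range k).sup f)))
      rintro ⟨r, c⟩ ⟨hr, _, h2⟩
      exact ⟨hr, lt_of_lt_of_le h2 (Finset.le_sup (Finset.mem_range.2 hr))⟩
    have hfin2 : ((fun c => (k, c)) '' (Set.Ico (g k) (f k))).Finite := by
      rw [hico]
      exact (Finset.Ico (g k) (f k)).finite_toSet.image _
    have hdisj : Disjoint {p : ℕ × ℕ | p.1 < k ∧ g p.1 ≤ p.2 ∧ p.2 < f p.1}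
        ((fun c => (k, c)) '' (Set.Ico (g k) (f k))) := by
      rw [Set.disjoint_left]
      rintro ⟨r, c⟩ ⟨hr, _, _⟩ ⟨c', _, heq⟩
      cases heq; exact lt_irrefl _ hr
    rw [hsplit, Set.ncard_union_eq hdisj hfin1 hfin2, ih,
      Set.ncard_image_of_injective _ (fun a b hab => by simpa using hab),
      hico, Set.ncard_coe_finset, Nat.card_Ico, Finset.sum_range_succ]

lemma ssyt_row_lower {lam : ℕ → ℕ} {T : ℕ → ℕ → ℕ} (hanti : Antitone lam)
    (hT : IsSSYT lam T) : ∀ r c, c < lam r → r + 1 ≤ T r c := by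
  intro r
  induction r with
  | zero => intro c hc; exact hT.1 0 c hc
  | succ r ih =>
    intro c hc
    have hc' : c < lam r := lt_of_lt_of_le hc (hanti (Nat.le_succ r))
    exact Nat.lt_of_le_of_lt (ih c hc') (hT.2.2.2 r (r+1) c (Nat.lt_succ_self r) hc)

/-- finiteness of entry-style sets -/
lemma entry_finite (lam : ℕ → ℕ) (N : ℕ) (hN : ∀ i, N ≤ i → lam i = 0)
    (P : ℕ × ℕ → Prop) : {p : ℕ × ℕ | p.2 < lam p.1 ∧ P p}.Finite := by
  apply Set.Finite.subset (Set.finite_Iio N |>.prod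
    (Set.finite_Iio ((Finset.range N).sup lam)))
  rintro ⟨r, c⟩ ⟨hc, _⟩
  have hr : r < N := by
    by_contra hr
    rw [hN r (le_of_not_gt hr)] at hc; omega
  exact ⟨hr, lt_of_lt_of_le hc (Finset.le_sup (Finset.mem_range.2 hr))⟩

/-- entries are bounded by the support of the weight -/
lemma ssyt_value_le {lam : ℕ → ℕ} {T : ℕ → ℕ → ℕ} {w : ℕ → ℕ} {b N : ℕ}
    (hN : ∀ i, N ≤ i → lam i = 0)
    (hW : HasWeight lam T w) (hw : ∀ m, b ≤ m → w m = 0) :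
    ∀ r c, c < lam r → T r c ≤ b := by
  intro r c hc
  by_contra hbig
  push_neg at hbig
  have hm : b ≤ T r c - 1 := by omega
  have h0 : entryCount lam T (T r c - 1) = 0 := by rw [hW _]; exact hw _ hm
  have hmem : (r, c) ∈ {p : ℕ × ℕ | p.2 < lam p.1 ∧ T p.1 p.2 = (T r c - 1) + 1} :=
    ⟨hc, by show T r c = T r c - 1 + 1; omega⟩
  have hpos : 0 < entryCount lam T (T r c - 1) := by
    rw [entryCount]
    refine Set.ncard_pos ?_ |>.2 ⟨(r,c), hmem⟩
    exact entry_finite lam N hN (fun p => T p.1 p.2 = (T r c - 1) + 1)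
  omega

end Helpers

section Dominance

lemma sum_entryCount {lam : ℕ → ℕ} {T : ℕ → ℕ → ℕ} {N : ℕ}
    (hN : ∀ i, N ≤ i → lam i = 0) (hT : IsSSYT lam T) (k : ℕ) :
    ∑ m ∈ Finset.range k, entryCount lam T m
      = {p : ℕ × ℕ | p.2 < lam p.1 ∧ T p.1 p.2 ≤ k}.ncard := by
  induction k with
  | zero =>
    have : {p : ℕ × ℕ | p.2 < lam p.1 ∧ T p.1 p.2 ≤ 0} = ∅ := by
      ext ⟨r, c⟩
      simp only [Set.mem_setOf_eq, Set.mem_empty_iff_false, iff_false, not_and]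
      intro hc hv
      have := hT.1 r c hc
      omega
    rw [Finset.range_zero, Finset.sum_empty, this, Set.ncard_empty]
  | succ k ih =>
    have hsplit : {p : ℕ × ℕ | p.2 < lam p.1 ∧ T p.1 p.2 ≤ k + 1}
        = {p : ℕ × ℕ | p.2 < lam p.1 ∧ T p.1 p.2 ≤ k}
          ∪ {p : ℕ × ℕ | p.2 < lam p.1 ∧ T p.1 p.2 = k + 1} := by
      ext ⟨r, c⟩
      simp only [Set.mem_setOf_eq, Set.mem_union]
      constructor
      · rintro ⟨hc, hv⟩
        rcases Nat.lt_succ_iff_lt_or_eq.1 (Nat.lt_succ_of_le hv) with h | h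
        · exact Or.inl ⟨hc, by omega⟩
        · exact Or.inr ⟨hc, by omega⟩
      · rintro (⟨hc, hv⟩ | ⟨hc, hv⟩) <;> exact ⟨hc, by omega⟩
    have hdisj : Disjoint {p : ℕ × ℕ | p.2 < lam p.1 ∧ T p.1 p.2 ≤ k}
        {p : ℕ × ℕ | p.2 < lam p.1 ∧ T p.1 p.2 = k + 1} := by
      rw [Set.disjoint_left]
      rintro ⟨r, c⟩ ⟨_, h1⟩ ⟨_, h2⟩
      omega
    rw [Finset.sum_range_succ, ih, hsplit,
      Set.ncard_union_eq hdisj (entry_finite lam N hN _) (entry_finite lam N hN _)]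
    rfl

lemma dominates_of_ssyt {lam mu : ℕ → ℕ} {T : ℕ → ℕ → ℕ} {N : ℕ}
    (hanti : Antitone lam) (hN : ∀ i, N ≤ i → lam i = 0)
    (hT : IsSSYT lam T) (hW : HasWeight lam T mu) : Dominates lam mu := by
  intro k
  have hsum : ∑ m ∈ Finset.range k, mu m
      = {p : ℕ × ℕ | p.2 < lam p.1 ∧ T p.1 p.2 ≤ k}.ncard := by
    rw [← sum_entryCount hN hT k]
    exact Finset.sum_congr rfl (fun m _ => (hW m).symm)
  rw [hsum]
  have hsub : {p : ℕ × ℕ | p.2 < lam p.1 ∧ T p.1 p.2 ≤ k}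
      ⊆ {p : ℕ × ℕ | p.1 < k ∧ (0 : ℕ) ≤ p.2 ∧ p.2 < lam p.1} := by
    rintro ⟨r, c⟩ ⟨hc, hv⟩
    have hv' : T r c ≤ k := hv
    have hc' : c < lam r := hc
    have := ssyt_row_lower hanti hT r c hc'
    exact ⟨by omega, Nat.zero_le _, hc⟩
  have hfin : {p : ℕ × ℕ | p.1 < k ∧ (0 : ℕ) ≤ p.2 ∧ p.2 < lam p.1}.Finite := by
    apply Set.Finite.subset (Set.finite_Iio k |>.prod
      (Set.finite_Iio ((Finset.range k).sup lam)))
    rintro ⟨r, c⟩ ⟨hr, _, h2⟩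
    exact ⟨hr, lt_of_lt_of_le h2 (Finset.le_sup (Finset.mem_range.2 hr))⟩
  calc {p : ℕ × ℕ | p.2 < lam p.1 ∧ T p.1 p.2 ≤ k}.ncard
      ≤ {p : ℕ × ℕ | p.1 < k ∧ (0:ℕ) ≤ p.2 ∧ p.2 < lam p.1}.ncard :=
        Set.ncard_le_ncard hsub hfin
    _ = ∑ r ∈ Finset.range k, (lam r - 0) := ncard_band lam (fun _ => 0) k
    _ ≤ ∑ r ∈ Finset.range k, lam r := by simp

end Dominance

section Existence

lemma psize_zero_eq_zero {f : ℕ → ℕ} {N : ℕ} (hN : ∀ i, N ≤ i → f i = 0)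
    (h0 : psize f = 0) : ∀ i, f i = 0 := by
  intro i
  rcases le_or_gt N i with h | h
  · exact hN i h
  · rw [psize_spec f N hN] at h0
    exact Finset.sum_eq_zero_iff.1 h0 i (Finset.mem_range.2 h)

/-- extend a tableau by a horizontal strip filled with value `v` -/
def extendT (ldag lam : ℕ → ℕ) (Td : ℕ → ℕ → ℕ) (v : ℕ) : ℕ → ℕ → ℕ :=
  fun r c => if c < ldag r then Td r c else if c < lam r then v else 0

theorem exists_ssyt : ∀ n : ℕ, ∀ lam mu : ℕ → ℕ, IsPartition lam → IsPartition mu →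
    psize lam = n → psize mu = n → Dominates lam mu →
    ∃ T, IsSSYT lam T ∧ HasWeight lam T mu := by
  intro n
  induction n using Nat.strong_induction_on with
  | _ n IH =>
  intro lam mu hlp hmp hln hmn hdom
  obtain ⟨hla, Nl, hNl⟩ := hlp
  obtain ⟨hma, Nm, hNm⟩ := hmp
  rcases Nat.eq_zero_or_pos n with rfl | hn
  · -- base case: everything is zero
    have hlz := psize_zero_eq_zero hNl hln
    have hmz := psize_zero_eq_zero hNm hmn
    refine ⟨fun _ _ => 0, ⟨?_, ?_, ?_, ?_⟩, ?_⟩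
    · intro i c hc; rw [hlz i] at hc; omega
    · intro i c _; rfl
    · intro i a b _ _; exact le_refl 0
    · intro i i' c _ hc; rw [hlz i'] at hc; omega
    · intro m
      have : {p : ℕ × ℕ | p.2 < lam p.1 ∧ (0 : ℕ) = m + 1} = ∅ := by
        ext ⟨r, c⟩; simp
      rw [entryCount, this, Set.ncard_empty, hmz m]
  · -- inductive step
    -- find the largest value index j with mu j > 0
    have hex : ∃ i, i ≤ Nm ∧ 0 < mu i := by
      by_contra hc
      push_neg at hc
      have : ∀ i, mu i = 0 := by
        intro i
        rcases le_or_gt i Nm with h | h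
        · have := hc i h; omega
        · exact hNm i (le_of_lt h)
      rw [psize_spec mu Nm hNm] at hmn
      have : ∑ i ∈ Finset.range Nm, mu i = 0 :=
        Finset.sum_eq_zero (fun i _ => this i)
      omega
    obtain ⟨i0, hi0, hmupos⟩ := hex
    set j := Nat.findGreatest (fun m => 0 < mu m) Nm with hj
    have hjpos : 0 < mu j := Nat.findGreatest_spec (P := fun m => 0 < mu m) hi0 hmupos
    have hjmax : ∀ m, j < m → mu m = 0 := by
      intro m hm
      rcases le_or_gt m Nm with h | h
      · by_contra hc
        exact Nat.findGreatest_is_greatest (P := fun m => 0 < mu m) hm h (Nat.pos_of_ne_zero hc)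
      · exact hNm m (le_of_lt h)
    set l := j + 1 with hl
    set s := mu j with hs
    have hspos : 0 < s := hjpos
    have hmusup : ∀ m, l ≤ m → mu m = 0 := fun m hm => hjmax m (by omega)
    have hmun : ∑ m ∈ Finset.range l, mu m = n := by
      rw [← psize_spec mu l hmusup]; exact hmn
    have hs_le : s ≤ lam 0 := by
      have h1 := hdom 1
      simp only [Finset.sum_range_one] at h1
      exact le_trans (hma (Nat.zero_le j)) h1
    -- lam vanishes from l on
    have hlamfull : ∑ r ∈ Finset.range l, lam r = n := by
      have hge : n ≤ ∑ r ∈ Finset.range l, lam r := hmun ▸ hdom l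
      have hle : ∑ r ∈ Finset.range l, lam r ≤ n :=
        hln ▸ sum_range_le_psize lam Nl l hNl
      omega
    have hlam0 : ∀ r, l ≤ r → lam r = 0 := by
      intro r hr
      have hsum : ∑ i ∈ Finset.range (r + 1), lam i ≤ n :=
        hln ▸ sum_range_le_psize lam Nl (r + 1) hNl
      have hsplit : ∑ i ∈ Finset.range l, lam i + ∑ i ∈ Finset.Ico l (r+1), lam i
          = ∑ i ∈ Finset.range (r+1), lam i := by
        rw [Finset.range_eq_Ico, Finset.range_eq_Ico]
        exact Finset.sum_Ico_consecutive _ (Nat.zero_le _) (by omega)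
      have hmem : lam r ≤ ∑ i ∈ Finset.Ico l (r+1), lam i :=
        Finset.single_le_sum (fun i _ => Nat.zero_le _)
          (Finset.mem_Ico.2 ⟨hr, Nat.lt_succ_self r⟩)
      omega
    -- the stripped shape
    set ldag : ℕ → ℕ := fun r => lam r - min s (lam r) + min s (lam (r+1)) with hldag
    have ha1 : ∀ r, lam (r+1) ≤ ldag r := by
      intro r
      have := hla (show r ≤ r + 1 by omega)
      simp only [hldag]
      omega
    have ha2 : ∀ r, ldag r ≤ lam r := by
      intro r
      have := hla (show r ≤ r + 1 by omega)
      simp only [hldag]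
      omega
    have hdanti : Antitone ldag :=
      antitone_nat_of_succ_le (fun r => le_trans (ha2 (r+1)) (ha1 r))
    have hdsup : ∀ r, l ≤ r → ldag r = 0 := by
      intro r hr
      simp only [hldag, hlam0 r hr, hlam0 (r+1) (by omega)]
      omega
    have hkey : ∀ k, (∑ r ∈ Finset.range k, ldag r) + s
        = (∑ r ∈ Finset.range k, lam r) + min s (lam k) := by
      intro k
      induction k with
      | zero => simp [min_eq_left hs_le]
      | succ k ihk =>
        rw [Finset.sum_range_succ, Finset.sum_range_succ]
        have : ldag k + min s (lam k) = lam k + min s (lam (k+1)) := by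
          simp only [hldag]; omega
        omega
    have hdsum : ∑ r ∈ Finset.range l, ldag r = n - s := by
      have := hkey l
      rw [hlamfull, hlam0 l (le_refl l)] at this
      omega
    have hdsize : psize ldag = n - s := by
      rw [psize_spec ldag l hdsup]; exact hdsum
    -- the stripped weight
    set mdag : ℕ → ℕ := fun m => if m < j then mu m else 0 with hmdag
    have hmdanti : Antitone mdag := by
      intro a b hab
      simp only [hmdag]
      by_cases hb : b < j
      · rw [if_pos hb, if_pos (by omega)]; exact hma hab
      · rw [if_neg hb]; omega
    have hmdsup : ∀ m, j ≤ m → mdag m = 0 := by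
      intro m hm; simp only [hmdag, if_neg (by omega : ¬ m < j)]
    have hmdsum : ∑ m ∈ Finset.range j, mdag m = n - s := by
      have hsplit : ∑ m ∈ Finset.range l, mu m
          = ∑ m ∈ Finset.range j, mu m + mu j := Finset.sum_range_succ mu j
      have : ∑ m ∈ Finset.range j, mdag m = ∑ m ∈ Finset.range j, mu m :=
        Finset.sum_congr rfl (fun m hm => by
          simp only [hmdag, if_pos (Finset.mem_range.1 hm)])
      omega
    have hmdsize : psize mdag = n - s := by
      rw [psize_spec mdag j hmdsup]; exact hmdsum
    -- dominance for the stripped pair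
    have hddom : Dominates ldag mdag := by
      intro k
      rcases le_or_gt k j with hk | hk
      · have hLHS : ∑ r ∈ Finset.range k, mdag r = ∑ r ∈ Finset.range k, mu r :=
          Finset.sum_congr rfl (fun m hm => by
            simp only [hmdag, if_pos (by have := Finset.mem_range.1 hm; omega : m < j)])
        have hk2 := hkey k
        rcases le_or_gt s (lam k) with hsk | hsk
        · have := hdom k
          rw [min_eq_left hsk] at hk2
          omega
        · have hd1 := hdom (k+1)
          have hmuk : s ≤ mu k := hma hk
          have hsum1 : ∑ r ∈ Finset.range (k+1), mu r
              = ∑ r ∈ Finset.range k, mu r + mu k := Finset.sum_range_succ mu k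
          have hsum2 : ∑ r ∈ Finset.range (k+1), lam r
              = ∑ r ∈ Finset.range k, lam r + lam k := Finset.sum_range_succ lam k
          have hminle : min s (lam k) = lam k := min_eq_right (le_of_lt hsk)
          omega
      · have hLHS : ∑ r ∈ Finset.range k, mdag r = n - s := by
          rw [← psize_spec mdag k (fun m hm => hmdsup m (by omega))]
          exact hmdsize
        have hRHS : ∑ r ∈ Finset.range k, ldag r = n - s := by
          rw [← psize_spec ldag k (fun m hm => hdsup m (by omega))]
          exact hdsize
        omega
    -- apply induction hypothesis
    obtain ⟨Td, hTd, hWd⟩ := IH (n - s) (by omega) ldag mdag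
      ⟨hdanti, l, hdsup⟩ ⟨hmdanti, j, hmdsup⟩ hdsize hmdsize hddom
    -- value bound for Td
    have hval : ∀ r c, c < ldag r → Td r c ≤ j :=
      ssyt_value_le hdsup hWd (fun m hm => hmdsup m hm)
    -- the new tableau
    refine ⟨extendT ldag lam Td (j+1), ⟨?_, ?_, ?_, ?_⟩, ?_⟩
    · intro i c hc
      simp only [extendT]
      by_cases hcd : c < ldag i
      · rw [if_pos hcd]; exact hTd.1 i c hcd
      · rw [if_neg hcd, if_pos hc]; omega
    · intro i c hc
      simp only [extendT]
      rw [if_neg (by have := ha2 i; omega), if_neg (by omega)]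
    · intro i a b hab hb
      simp only [extendT]
      by_cases hbd : b < ldag i
      · rw [if_pos (by omega : a < ldag i), if_pos hbd]
        exact hTd.2.2.1 i a b hab hbd
      · rw [if_neg hbd, if_pos hb]
        by_cases had : a < ldag i
        · rw [if_pos had]
          exact le_trans (hval i a had) (Nat.le_succ j)
        · rw [if_neg had, if_pos (by omega)]
    · intro i i' c hii' hc
      simp only [extendT]
      have hci : c < ldag i := by
        have h1 : lam i' ≤ lam (i+1) := hla (by omega)
        have := ha1 i
        omega
      rw [if_pos hci]
      by_cases hcd : c < ldag i'
      · rw [if_pos hcd]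
        exact hTd.2.2.2 i i' c hii' hcd
      · rw [if_neg hcd, if_pos hc]
        have := hval i c hci
        omega
    · -- weight
      intro m
      rcases lt_trichotomy m j with hm | hm | hm
      · have hset : {p : ℕ × ℕ | p.2 < lam p.1 ∧ extendT ldag lam Td (j+1) p.1 p.2 = m + 1}
            = {p : ℕ × ℕ | p.2 < ldag p.1 ∧ Td p.1 p.2 = m + 1} := by
          ext ⟨r, c⟩
          simp only [Set.mem_setOf_eq, extendT]
          constructor
          · rintro ⟨hc, hv⟩
            by_cases hcd : c < ldag r
            · rw [if_pos hcd] at hv; exact ⟨hcd, hv⟩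
            · rw [if_neg hcd, if_pos hc] at hv; omega
          · rintro ⟨hc, hv⟩
            exact ⟨by have := ha2 r; omega, by rw [if_pos hc]; exact hv⟩
        rw [entryCount, hset]
        have hwd := hWd m
        rw [entryCount] at hwd
        rw [hwd]
        simp only [hmdag, if_pos hm]
      · -- m = j : the strip
        have hset : {p : ℕ × ℕ | p.2 < lam p.1 ∧ extendT ldag lam Td (j+1) p.1 p.2 = m + 1}
            = {p : ℕ × ℕ | p.1 < l ∧ ldag p.1 ≤ p.2 ∧ p.2 < lam p.1} := by
          ext ⟨r, c⟩
          simp only [Set.mem_setOf_eq, extendT]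
          constructor
          · rintro ⟨hc, hv⟩
            by_cases hcd : c < ldag r
            · rw [if_pos hcd] at hv
              have := hval r c hcd
              omega
            · refine ⟨?_, by omega, hc⟩
              by_contra hr
              have := hlam0 r (le_of_not_gt hr)
              omega
          · rintro ⟨hr, hc1, hc2⟩
            exact ⟨hc2, by rw [if_neg (by omega), if_pos hc2]; omega⟩
        rw [entryCount, hset, ncard_band lam ldag l]
        have hsplitsum : ∑ r ∈ Finset.range l, (ldag r + (lam r - ldag r))
            = ∑ r ∈ Finset.range l, lam r :=
          Finset.sum_congr rfl (fun r _ => by have := ha2 r; omega)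
        rw [Finset.sum_add_distrib] at hsplitsum
        have hsn : s ≤ n := hmun ▸ Finset.single_le_sum (f := mu)
          (fun i _ => Nat.zero_le _) (Finset.mem_range.2 (by omega : j < l))
        rw [hm]
        omega
      · -- m > j : empty
        have hset : {p : ℕ × ℕ | p.2 < lam p.1 ∧ extendT ldag lam Td (j+1) p.1 p.2 = m + 1}
            = ∅ := by
          ext ⟨r, c⟩
          simp only [Set.mem_setOf_eq, Set.mem_empty_iff_false, iff_false, not_and]
          intro hc hv
          simp only [extendT] at hv
          by_cases hcd : c < ldag r
          · rw [if_pos hcd] at hv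
            have := hval r c hcd
            omega
          · rw [if_neg hcd, if_pos hc] at hv
            omega
        rw [entryCount, hset, Set.ncard_empty, hjmax m hm]

end Existence

section Prepend

/-- prepend a first column `1, 2, ..., h` to a tableau -/
def prependT (h : ℕ) (S : ℕ → ℕ → ℕ) : ℕ → ℕ → ℕ :=
  fun r c => if r < h then (if c = 0 then r + 1 else S r (c - 1)) else 0

lemma prepend_ssyt {lam mu : ℕ → ℕ} {h : ℕ} {S : ℕ → ℕ → ℕ}
    (hlh1 : ∀ i, i < h → 0 < lam i) (hlh2 : ∀ i, h ≤ i → lam i = 0)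
    (hmu1 : ∀ i, i < h → 1 ≤ mu i)
    (halams : Antitone (fun i => if i < h then lam i - 1 else lam i))
    (hS : IsSSYT (fun i => if i < h then lam i - 1 else lam i) S)
    (hW : HasWeight (fun i => if i < h then lam i - 1 else lam i) S
      (fun i => if i < h then mu i - 1 else mu i)) :
    IsSSYT lam (prependT h S) ∧ HasWeight lam (prependT h S) mu := by
  set lams : ℕ → ℕ := fun i => if i < h then lam i - 1 else lam i with hlams
  have hlamsup : ∀ i, h ≤ i → lams i = 0 := by
    intro i hi
    simp only [hlams, if_neg (by omega : ¬ i < h)]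
    exact hlh2 i hi
  have hrowlow : ∀ r c, c < lams r → r + 1 ≤ S r c := ssyt_row_lower halams hS
  have hlams_lt : ∀ r c, r < h → 1 ≤ c → c < lam r → c - 1 < lams r := by
    intro r c hr h1 h2
    simp only [hlams, if_pos hr]
    omega
  constructor
  · refine ⟨?_, ?_, ?_, ?_⟩
    · intro r c hc
      have hr : r < h := by
        by_contra hr
        have := hlh2 r (le_of_not_gt hr)
        omega
      simp only [prependT, if_pos hr]
      by_cases hc0 : c = 0
      · rw [if_pos hc0]; omega
      · rw [if_neg hc0]
        exact hS.1 r (c-1) (hlams_lt r c hr (by omega) hc)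
    · intro r c hc
      simp only [prependT]
      by_cases hr : r < h
      · rw [if_pos hr, if_neg (by have := hlh1 r hr; omega : ¬ c = 0)]
        apply hS.2.1
        simp only [hlams, if_pos hr]
        omega
      · rw [if_neg hr]
    · intro r a b hab hb
      have hr : r < h := by
        by_contra hr
        have := hlh2 r (le_of_not_gt hr)
        omega
      simp only [prependT, if_pos hr]
      by_cases hb0 : b = 0
      · rw [if_pos hb0, if_pos (by omega : a = 0)]
      · rw [if_neg hb0]
        by_cases ha0 : a = 0
        · rw [if_pos ha0]
          exact hrowlow r (b-1) (hlams_lt r b hr (by omega) hb)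
        · rw [if_neg ha0]
          exact hS.2.2.1 r (a-1) (b-1) (by omega)
            (hlams_lt r b hr (by omega) hb)
    · intro r r' c hrr' hc
      have hr' : r' < h := by
        by_contra hr
        have := hlh2 r' (le_of_not_gt hr)
        omega
      have hr : r < h := by omega
      simp only [prependT, if_pos hr, if_pos hr']
      by_cases hc0 : c = 0
      · rw [if_pos hc0, if_pos hc0]; omega
      · rw [if_neg hc0, if_neg hc0]
        exact hS.2.2.2 r r' (c-1) hrr' (hlams_lt r' c hr' (by omega) hc)
  · intro m
    have hinj : Function.Injective (fun p : ℕ × ℕ => (p.1, p.2 + 1)) := by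
      rintro ⟨a, b⟩ ⟨a', b'⟩ heq
      simp only [Prod.mk.injEq] at heq ⊢
      exact ⟨heq.1, by omega⟩
    have hEfin : {p : ℕ × ℕ | p.2 < lams p.1 ∧ S p.1 p.2 = m + 1}.Finite :=
      entry_finite lams h hlamsup _
    have hrlt : ∀ (p : ℕ × ℕ), p.2 < lams p.1 → p.1 < h := by
      rintro ⟨r, c⟩ hc
      by_contra hr
      have := hlamsup r (le_of_not_gt hr)
      simp only [this] at hc
      omega
    have himg : ∀ r c, c < lams r → S r c = m + 1 →
        (c + 1 < lam r ∧ prependT h S r (c + 1) = m + 1) := by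
      intro r c hc hv
      have hrh : r < h := hrlt (r, c) hc
      have hc2 : c < lam r - 1 := by
        simp only [hlams, if_pos hrh] at hc
        exact hc
      have := hlh1 r hrh
      constructor
      · omega
      · simp only [prependT, if_pos hrh, if_neg (by omega : ¬ c + 1 = 0)]
        simpa using hv
    by_cases hm : m < h
    · have hbig : {p : ℕ × ℕ | p.2 < lam p.1 ∧ prependT h S p.1 p.2 = m + 1}
          = insert (m, 0) ((fun p : ℕ × ℕ => (p.1, p.2 + 1)) ''
            {p : ℕ × ℕ | p.2 < lams p.1 ∧ S p.1 p.2 = m + 1}) := by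
        ext ⟨r, c⟩
        simp only [Set.mem_setOf_eq, Set.mem_insert_iff, Set.mem_image, Prod.mk.injEq]
        constructor
        · rintro ⟨hc, hv⟩
          have hr : r < h := by
            by_contra hr
            have := hlh2 r (le_of_not_gt hr)
            omega
          simp only [prependT, if_pos hr] at hv
          by_cases hc0 : c = 0
          · rw [if_pos hc0] at hv
            exact Or.inl ⟨by omega, hc0⟩
          · rw [if_neg hc0] at hv
            exact Or.inr ⟨(r, c-1), ⟨hlams_lt r c hr (by omega) hc, hv⟩,
              rfl, by omega⟩
        · rintro (⟨hrm, hc0⟩ | ⟨⟨r', c'⟩, ⟨hcs, hvs⟩, hr', hc'⟩)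
          · constructor
            · rw [hrm, hc0]; exact hlh1 m hm
            · rw [hrm, hc0]; simp [prependT, if_pos hm]
          · have := himg r' c' hcs hvs
            have hr2 : r' = r := hr'
            have hc2 : c' + 1 = c := hc'
            rw [hr2, hc2] at this
            exact this
      rw [entryCount, hbig]
      have hnotmem : (m, 0) ∉ ((fun p : ℕ × ℕ => (p.1, p.2 + 1)) ''
          {p : ℕ × ℕ | p.2 < lams p.1 ∧ S p.1 p.2 = m + 1}) := by
        rintro ⟨⟨r', c'⟩, _, heq⟩
        simp only [Prod.mk.injEq] at heq
        omega
      rw [Set.ncard_insert_of_notMem hnotmem (hEfin.image _),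
        Set.ncard_image_of_injective _ hinj]
      have hWm := hW m
      rw [entryCount] at hWm
      rw [hWm]
      simp only [if_pos hm]
      have := hmu1 m hm
      omega
    · have hbig : {p : ℕ × ℕ | p.2 < lam p.1 ∧ prependT h S p.1 p.2 = m + 1}
          = ((fun p : ℕ × ℕ => (p.1, p.2 + 1)) ''
            {p : ℕ × ℕ | p.2 < lams p.1 ∧ S p.1 p.2 = m + 1}) := by
        ext ⟨r, c⟩
        simp only [Set.mem_setOf_eq, Set.mem_image, Prod.mk.injEq]
        constructor
        · rintro ⟨hc, hv⟩
          have hr : r < h := by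
            by_contra hr
            have := hlh2 r (le_of_not_gt hr)
            omega
          simp only [prependT, if_pos hr] at hv
          by_cases hc0 : c = 0
          · rw [if_pos hc0] at hv
            omega
          · rw [if_neg hc0] at hv
            exact ⟨(r, c-1), ⟨hlams_lt r c hr (by omega) hc, hv⟩, rfl, by omega⟩
        · rintro ⟨⟨r', c'⟩, ⟨hcs, hvs⟩, hr', hc'⟩
          have := himg r' c' hcs hvs
          have hr2 : r' = r := hr'
          have hc2 : c' + 1 = c := hc'
          rw [hr2, hc2] at this
          exact this
      rw [entryCount, hbig, Set.ncard_image_of_injective _ hinj]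
      have hWm := hW m
      rw [entryCount] at hWm
      rw [hWm]
      simp only [if_neg hm]

end Prepend

section Assembly

lemma starPartSum (f : ℕ → ℕ) (h : ℕ) (hf : ∀ i, i < h → 1 ≤ f i) (k : ℕ) :
    (∑ i ∈ Finset.range k, (if i < h then f i - 1 else f i)) + min k h
      = ∑ i ∈ Finset.range k, f i := by
  induction k with
  | zero => simp
  | succ k ih =>
    rw [Finset.sum_range_succ, Finset.sum_range_succ]
    by_cases hk : k < h
    · rw [if_pos hk]
      have := hf k hk
      omega
    · rw [if_neg hk]
      omega

theorem stmt19 (n h l : ℕ) (lam mu : ℕ → ℕ)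
    (hlp : IsPartition lam) (hln : psize lam = n)
    (hmp : IsPartition mu) (hmn : psize mu = n)
    (hk : kostka lam mu = 1)
    (hlh : PartLength lam h) (hml : PartLength mu l)
    (h1 : mu h < mu (h - 1)) (h2 : 1 < mu (h - 1)) :
    IsPartition (fun i => if i < h then lam i - 1 else lam i) ∧
    psize (fun i => if i < h then lam i - 1 else lam i) = n - h ∧
    IsPartition (fun i => if i < h then mu i - 1 else mu i) ∧
    psize (fun i => if i < h then mu i - 1 else mu i) = n - h ∧
    kostka (fun i => if i < h then lam i - 1 else lam i)
        (fun i => if i < h then mu i - 1 else mu i) = 1 := by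
  have hh : 0 < h := by
    rcases Nat.eq_zero_or_pos h with rfl | hh
    · have h0 : (0 : ℕ) - 1 = 0 := rfl
      rw [h0] at h1
      exact absurd h1 (lt_irrefl _)
    · exact hh
  have hNl : ∀ i, h ≤ i → lam i = 0 := hlh.2
  have hlam1 : ∀ i, i < h → 1 ≤ lam i := hlh.1
  have hmu2 : ∀ i, i < h → 2 ≤ mu i := fun i hi =>
    le_trans h2 (hmp.1 (by omega : i ≤ h - 1))
  have hmu1 : ∀ i, i < h → 1 ≤ mu i := fun i hi => by have := hmu2 i hi; omega
  set lams : ℕ → ℕ := fun i => if i < h then lam i - 1 else lam i with hlamsdef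
  set mus : ℕ → ℕ := fun i => if i < h then mu i - 1 else mu i with hmusdef
  have hlamss : ∀ i, h ≤ i → lams i = 0 := by
    intro i hi
    simp only [hlamsdef, if_neg (by omega : ¬ i < h)]
    exact hNl i hi
  have hmuss : ∀ i, h + l ≤ i → mus i = 0 := by
    intro i hi
    simp only [hmusdef, if_neg (by omega : ¬ i < h)]
    exact hml.2 i (by omega)
  have halams : Antitone lams := by
    apply antitone_nat_of_succ_le
    intro i
    have hmono : lam (i+1) ≤ lam i := hlp.1 (by omega)
    simp only [hlamsdef]
    by_cases hi : i + 1 < h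
    · rw [if_pos hi, if_pos (by omega : i < h)]
      omega
    · rw [if_neg hi]
      by_cases hih : i < h
      · rw [if_pos hih]
        have h0 : lam (i+1) = 0 := hNl (i+1) (by omega)
        omega
      · rw [if_neg hih]
        exact hmono
  have hamus : Antitone mus := by
    apply antitone_nat_of_succ_le
    intro i
    have hmono : mu (i+1) ≤ mu i := hmp.1 (by omega)
    simp only [hmusdef]
    by_cases hi : i + 1 < h
    · rw [if_pos hi, if_pos (by omega : i < h)]
      omega
    · rw [if_neg hi]
      by_cases hih : i < h
      · rw [if_pos hih]
        have hieq : i = h - 1 := by omega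
        have hieq2 : i + 1 = h := by omega
        rw [hieq2, hieq]
        omega
      · rw [if_neg hih]
        exact hmono
  have hlamsum : ∑ i ∈ Finset.range h, lam i = n := by
    rw [← psize_spec lam h hNl]; exact hln
  have hpslams : psize lams = n - h := by
    rw [psize_spec lams h hlamss]
    have := starPartSum lam h hlam1 h
    simp only [min_self] at this
    simp only [hlamsdef]
    omega
  have hmusum : ∑ i ∈ Finset.range (h + l), mu i = n := by
    rw [← psize_spec mu (h + l) (fun i hi => hml.2 i (by omega))]; exact hmn
  have hpsmus : psize mus = n - h := by
    rw [psize_spec mus (h + l) hmuss]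
    have := starPartSum mu h hmu1 (h + l)
    rw [min_eq_right (by omega : h ≤ h + l)] at this
    simp only [hmusdef]
    omega
  -- the unique tableau of shape lam and weight mu
  rw [kostka, Set.ncard_eq_one] at hk
  obtain ⟨T0, hT0⟩ := hk
  have hT0mem : IsSSYT lam T0 ∧ HasWeight lam T0 mu := by
    have : T0 ∈ {T : ℕ → ℕ → ℕ | IsSSYT lam T ∧ HasWeight lam T mu} := by
      rw [hT0]; rfl
    exact this
  have hdom : Dominates lam mu :=
    dominates_of_ssyt hlp.1 hNl hT0mem.1 hT0mem.2
  have hdoms : Dominates lams mus := by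
    intro k
    have hsl := starPartSum lam h hlam1 k
    have hsm := starPartSum mu h hmu1 k
    have := hdom k
    simp only [hlamsdef, hmusdef]
    omega
  obtain ⟨S0, hS0, hW0⟩ := exists_ssyt (n - h) lams mus
    ⟨halams, h, hlamss⟩ ⟨hamus, h + l, hmuss⟩ hpslams hpsmus hdoms
  refine ⟨⟨halams, h, hlamss⟩, hpslams, ⟨hamus, h + l, hmuss⟩, hpsmus, ?_⟩
  rw [kostka, Set.ncard_eq_one]
  refine ⟨S0, ?_⟩
  ext S
  simp only [Set.mem_setOf_eq, Set.mem_singleton_iff]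
  constructor
  · rintro ⟨hS, hWS⟩
    have hPS : prependT h S = T0 := by
      have hmem : prependT h S ∈ {T : ℕ → ℕ → ℕ | IsSSYT lam T ∧ HasWeight lam T mu} :=
        prepend_ssyt hlh.1 hNl hmu1 halams hS hWS
      rw [hT0] at hmem
      exact hmem
    have hPS0 : prependT h S0 = T0 := by
      have hmem : prependT h S0 ∈ {T : ℕ → ℕ → ℕ | IsSSYT lam T ∧ HasWeight lam T mu} :=
        prepend_ssyt hlh.1 hNl hmu1 halams hS0 hW0
      rw [hT0] at hmem
      exact hmem
    have hPP : prependT h S = prependT h S0 := by rw [hPS, hPS0]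
    funext r c
    by_cases hc : c < lams r
    · have hr : r < h := by
        by_contra hr
        have := hlamss r (le_of_not_gt hr)
        omega
      have e1 : S r c = prependT h S r (c + 1) := by
        simp [prependT, if_pos hr]
      have e2 : S0 r c = prependT h S0 r (c + 1) := by
        simp [prependT, if_pos hr]
      rw [e1, e2, hPP]
    · rw [hS.2.1 r c (le_of_not_gt hc), hS0.2.1 r c (le_of_not_gt hc)]
  · rintro rfl
    exact ⟨hS0, hW0⟩

end Assembly
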